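/- Let a : (0,∞) → (0,∞) be C¹ with i_a = inf t a'(t)/a(t) > −1 and s_a = sup t a'(t)/a(t) < ∞. For ε > 0 define a_ε(t) = a(√(t²+ε²)) on [0,∞). Then i_{a_ε} ≥ min{i_a, 0} and s_{a_ε} ≤ max{s_a, 0}, where i_{a_ε} = inf_{t>0} t a_ε'(t)/a_ε(t) and s_{a_ε} = sup_{t>0} t a_ε'(t)/a_ε(t). -/

import Mathlib

theorem stmt15 (a a' : ℝ → ℝ) (ia sa ε : ℝ) (hε : 0 < ε)
    (hpos : ∀ t > 0, 0 < a t)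
    (hderiv : ∀ t > 0, HasDerivAt a (a' t) t)
    (hia : -1 < ia)
    (h1 : ∀ t > 0, ia ≤ t * a' t / a t)
    (h2 : ∀ t > 0, t * a' t / a t ≤ sa) :
    ∀ t > 0,
      min ia 0 ≤
        t * (a' (Real.sqrt (t^2 + ε^2)) * (t / Real.sqrt (t^2 + ε^2)))
          / a (Real.sqrt (t^2 + ε^2)) ∧
      t * (a' (Real.sqrt (t^2 + ε^2)) * (t / Real.sqrt (t^2 + ε^2)))
          / a (Real.sqrt (t^2 + ε^2)) ≤ max sa 0 := by
  intro t ht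
  set s := Real.sqrt (t^2 + ε^2) with hsdef
  have hsum : (0:ℝ) < t^2 + ε^2 := by positivity
  have hs : 0 < s := Real.sqrt_pos.mpr hsum
  have hs2 : s^2 = t^2 + ε^2 := Real.sq_sqrt hsum.le
  have has : 0 < a s := hpos s hs
  have hq1 : ia ≤ s * a' s / a s := h1 s hs
  have hq2 : s * a' s / a s ≤ sa := h2 s hs
  set q := s * a' s / a s with hqdef
  have hc0 : (0:ℝ) ≤ t^2 / s^2 := by positivity
  have hc1 : t^2 / s^2 ≤ 1 := by
    rw [div_le_one (by positivity)]
    nlinarith [sq_nonneg ε]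
  have heq : t * (a' s * (t / s)) / a s = (t^2 / s^2) * q := by
    rw [hqdef]
    field_simp
  rw [heq]
  rcases le_or_gt 0 q with hq | hq
  · constructor
    · exact le_trans (min_le_right _ _) (by positivity)
    · calc (t^2/s^2) * q ≤ 1 * q := by
            exact mul_le_mul_of_nonneg_right hc1 hq
        _ = q := one_mul q
        _ ≤ sa := hq2
        _ ≤ max sa 0 := le_max_left _ _
  · constructor
    · calc min ia 0 ≤ ia := min_le_left _ _
        _ ≤ q := hq1
        _ = 1 * q := (one_mul q).symm
        _ ≤ (t^2/s^2) * q := by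
            exact mul_le_mul_of_nonpos_right hc1 hq.le
    · exact le_trans (mul_nonpos_of_nonneg_of_nonpos hc0 hq.le) (le_max_right _ _)
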